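/- Let A ⊆ M^k be definable in an o-minimal structure M expanding an ordered group, and X = Sp(A). An open subset C ⊆ X is quasi-compact (in the spectral topology) if and only if C = Sp(D) for some definable D ⊆ A. -/

import Mathlib

open FirstOrder Set Classical

/-- `Defin L M s` : the set `s ⊆ Mᵏ` is definable in the structure `M` with parameters from `M`. -/
def Defin (L : FirstOrder.Language) (M : Type) [L.Structure M] {k : ℕ}
    (s : Set (Fin k → M)) : Prop :=
  Set.Definable (Set.univ : Set M) L s

/-- `M` is an o-minimal structure: the order is definable, and every definable subset of `M`
is a finite union of points and open intervals (possibly unbounded). -/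
def IsOMin (L : FirstOrder.Language) (M : Type) [L.Structure M] [LinearOrder M] : Prop :=
  Set.Definable (Set.univ : Set M) L {p : Fin 2 → M | p 0 < p 1} ∧
  ∀ s : Set (Fin 1 → M), Defin L M s →
    ∃ (F : Finset M) (n : ℕ) (J : Fin n → Set M),
      (∀ i, (∃ a b, J i = Set.Ioo a b) ∨ (∃ a, J i = Set.Ioi a) ∨
            (∃ b, J i = Set.Iio b) ∨ J i = Set.univ) ∧
      (fun p : Fin 1 → M => p 0) '' s = ↑F ∪ ⋃ i, J i

/-- `M` expands an ordered group: the graph of addition is definable. -/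
def ExpandsGroup (L : FirstOrder.Language) (M : Type) [L.Structure M] [Add M] : Prop :=
  Set.Definable (Set.univ : Set M) L {p : Fin 3 → M | p 0 + p 1 = p 2}

/-- `M` expands a (real closed, by o-minimality) field: graphs of `+` and `*` are definable. -/
def ExpandsField (L : FirstOrder.Language) (M : Type) [L.Structure M] [Add M] [Mul M] : Prop :=
  Set.Definable (Set.univ : Set M) L {p : Fin 3 → M | p 0 + p 1 = p 2} ∧
  Set.Definable (Set.univ : Set M) L {p : Fin 3 → M | p 0 * p 1 = p 2}

/-- o-minimal dimension of a subset of `Mᵏ` : the largest `d` such that some coordinate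
projection onto `M^d` has nonempty interior; `-1` for the empty set. -/

noncomputable def odim {M : Type} [TopologicalSpace M] {k : ℕ} (s : Set (Fin k → M)) : ℤ :=
  if s.Nonempty then
    ((sSup {d : ℕ | ∃ f : Fin d → Fin k, Function.Injective f ∧
      (interior ((fun x : Fin k → M => x ∘ f) '' s)).Nonempty} : ℕ) : ℤ)
  else -1

/-- A point of the o-minimal spectrum `Sp A`: a complete type over `M` concentrated on `A`,
presented as an ultrafilter on the Boolean algebra of definable subsets of `A`. -/
structure OType (L : FirstOrder.Language) (M : Type) [L.Structure M] {k : ℕ}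
    (A : Set (Fin k → M)) where
  sets : Set (Set (Fin k → M))
  definable_mem : ∀ s ∈ sets, Defin L M s
  subset_mem : ∀ s ∈ sets, s ⊆ A
  top_mem : A ∈ sets
  nonempty_mem : ∀ s ∈ sets, s.Nonempty
  inter_mem : ∀ s ∈ sets, ∀ t ∈ sets, s ∩ t ∈ sets
  complete : ∀ s : Set (Fin k → M), Defin L M s → s ⊆ A → (s ∈ sets ∨ A \ s ∈ sets)

/-- The spectral topology on `Sp A`, generated by the sets `Sp U` for `U` open definable. -/
instance OType.topology (L : FirstOrder.Language) (M : Type) [L.Structure M] [TopologicalSpace M]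
    {k : ℕ} (A : Set (Fin k → M)) : TopologicalSpace (OType L M A) :=
  TopologicalSpace.generateFrom
    {V | ∃ U : Set (Fin k → M), IsOpen U ∧ Defin L M U ∧
      V = {x : OType L M A | U ∩ A ∈ x.sets}}

/-- The dimension of a type: the minimal dimension of a definable set on which it concentrates. -/
noncomputable def OType.tdim {L : FirstOrder.Language} {M : Type} [L.Structure M]
    [TopologicalSpace M] {k : ℕ} {A : Set (Fin k → M)} (x : OType L M A) : ℤ :=
  sInf {d : ℤ | ∃ s ∈ x.sets, odim s = d}

section Aux

variable {L : FirstOrder.Language} {M : Type} [L.Structure M] {k : ℕ} {A : Set (Fin k → M)}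

theorem OType.mem_of_superset (x : OType L M A) {s t : Set (Fin k → M)}
    (hs : s ∈ x.sets) (ht : Defin L M t) (htA : t ⊆ A) (hst : s ⊆ t) : t ∈ x.sets := by
  rcases x.complete t ht htA with h | h
  · exact h
  · exfalso
    obtain ⟨a, ha⟩ := x.nonempty_mem _ (x.inter_mem s hs _ h)
    exact ha.2.2 (hst ha.1)

theorem OType.union_mem_iff (x : OType L M A) {s t : Set (Fin k → M)}
    (hs : Defin L M s) (hsA : s ⊆ A) (ht : Defin L M t) (htA : t ⊆ A) :
    s ∪ t ∈ x.sets ↔ s ∈ x.sets ∨ t ∈ x.sets := by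
  constructor
  · intro h
    rcases x.complete s hs hsA with h1 | h1
    · exact Or.inl h1
    rcases x.complete t ht htA with h2 | h2
    · exact Or.inr h2
    exfalso
    obtain ⟨a, ha⟩ := x.nonempty_mem _ (x.inter_mem _ (x.inter_mem _ h _ h1) _ h2)
    have hmem : a ∈ s ∪ t := ha.1.1
    rcases hmem with h' | h'
    · exact ha.1.2.2 h'
    · exact ha.2.2 h'
  · intro h
    rcases h with h | h
    · exact x.mem_of_superset h (Set.Definable.union hs ht) (union_subset hsA htA)
        subset_union_left
    · exact x.mem_of_superset h (Set.Definable.union hs ht) (union_subset hsA htA)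
        subset_union_right

theorem OType.biUnion_mem_iff {ι : Type*} (x : OType L M A) (s : Finset ι)
    {f : ι → Set (Fin k → M)} (hf : ∀ i, Defin L M (f i)) (hfA : ∀ i, f i ⊆ A) :
    (⋃ i ∈ s, f i) ∈ x.sets ↔ ∃ i ∈ s, f i ∈ x.sets := by
  classical
  induction s using Finset.induction with
  | empty =>
    simp only [Finset.notMem_empty, iUnion_of_empty, iUnion_empty, exists_prop, false_and,
      exists_false, iff_false]
    intro h
    obtain ⟨a, ha⟩ := x.nonempty_mem _ h
    exact ha
  | @insert i s hi ih =>
    rw [Finset.set_biUnion_insert,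
      x.union_mem_iff (hf i) (hfA i) (Set.definable_biUnion_finset (fun j => hf j) s)
        (iUnion₂_subset fun j _ => hfA j), ih]
    simp only [Finset.mem_insert]
    constructor
    · rintro (h | ⟨j, hj, h⟩)
      · exact ⟨i, Or.inl rfl, h⟩
      · exact ⟨j, Or.inr hj, h⟩
    · rintro ⟨j, (rfl | hj), h⟩
      · exact Or.inl h
      · exact Or.inr ⟨j, hj, h⟩

theorem OType.isBasis [TopologicalSpace M] (hA : Defin L M A) :
    TopologicalSpace.IsTopologicalBasis
      {V | ∃ U : Set (Fin k → M), IsOpen U ∧ Defin L M U ∧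
        V = {x : OType L M A | U ∩ A ∈ x.sets}} := by
  refine ⟨?_, ?_, rfl⟩
  · rintro t₁ ⟨U₁, hU₁o, hU₁d, rfl⟩ t₂ ⟨U₂, hU₂o, hU₂d, rfl⟩ x ⟨hx₁, hx₂⟩
    refine ⟨{y : OType L M A | (U₁ ∩ U₂) ∩ A ∈ y.sets},
      ⟨U₁ ∩ U₂, hU₁o.inter hU₂o, Set.Definable.inter hU₁d hU₂d, rfl⟩, ?_, ?_⟩
    · have h := x.inter_mem _ hx₁ _ hx₂
      have he : (U₁ ∩ A) ∩ (U₂ ∩ A) = (U₁ ∩ U₂) ∩ A := by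
        ext a; simp only [mem_inter_iff]; tauto
      rwa [he] at h
    · intro y hy
      exact ⟨y.mem_of_superset hy (Set.Definable.inter hU₁d hA) inter_subset_right
          (fun a ha => ⟨ha.1.1, ha.2⟩),
        y.mem_of_superset hy (Set.Definable.inter hU₂d hA) inter_subset_right
          (fun a ha => ⟨ha.1.2, ha.2⟩)⟩
  · rw [sUnion_eq_univ_iff]
    intro x
    refine ⟨{y : OType L M A | univ ∩ A ∈ y.sets}, ⟨univ, isOpen_univ, Set.definable_univ, rfl⟩, ?_⟩
    simp only [mem_setOf_eq, univ_inter]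
    exact x.top_mem

/-- The spectrum of a definable subset is quasi-compact. -/
theorem OType.isCompact_sp [TopologicalSpace M] (hA : Defin L M A) {D : Set (Fin k → M)}
    (hD : Defin L M D) (hDA : D ⊆ A) : IsCompact {x : OType L M A | D ∈ x.sets} := by
  classical
  refine isCompact_of_finite_subcover ?_
  intro ι V hVopen hcover
  have key : ∀ x : OType L M A, D ∈ x.sets →
      ∃ (i : ι) (W : Set (Fin k → M)), IsOpen W ∧ Defin L M W ∧ W ∩ A ∈ x.sets ∧
        {y : OType L M A | W ∩ A ∈ y.sets} ⊆ V i := by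
    intro x hx
    obtain ⟨i, hi⟩ := mem_iUnion.1 (hcover hx)
    obtain ⟨B, ⟨W, hWo, hWd, rfl⟩, hxB, hBV⟩ :=
      (OType.isBasis hA).exists_subset_of_mem_open hi (hVopen i)
    exact ⟨i, W, hWo, hWd, hxB, hBV⟩
  choose ind W hWo hWd hWx hWV using key
  set σ := {x : OType L M A // D ∈ x.sets} with hσ
  set W' : σ → Set (Fin k → M) := fun p => W p.1 p.2 with hW'
  -- main claim: finitely many W' cover D at the level of sets
  have claim : ∃ t : Finset σ, D ⊆ ⋃ p ∈ t, W' p := by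
    by_contra hcon
    push_neg at hcon
    -- build a filter whose sets D \ (finite unions) are all nonempty
    haveI : Nonempty (Finset σ) := ⟨∅⟩
    set F : Filter (Fin k → M) := ⨅ I : Finset σ, Filter.principal (D \ ⋃ p ∈ I, W' p) with hF
    have hdir : Directed (· ≥ ·) fun I : Finset σ => Filter.principal (D \ ⋃ p ∈ I, W' p) := by
      intro I J
      refine ⟨I ∪ J, ?_, ?_⟩ <;> refine Filter.principal_mono.2 (diff_subset_diff_right ?_) <;>
        refine iUnion₂_subset fun p hp => subset_iUnion₂ (s := fun p _ => W' p) p ?_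
      · exact Finset.mem_union_left _ hp
      · exact Finset.mem_union_right _ hp
    haveI hFne : F.NeBot := by
      refine Filter.iInf_neBot_of_directed' hdir fun I => ?_
      rw [Filter.principal_neBot_iff]
      obtain ⟨a, haD, ha⟩ := not_subset.1 (hcon I)
      exact ⟨a, haD, fun hmem => ha hmem⟩
    obtain ⟨𝒰, h𝒰⟩ := Ultrafilter.exists_le F
    have hmemF : ∀ (I : Finset σ), D \ ⋃ p ∈ I, W' p ∈ 𝒰 :=
      fun I => h𝒰 (Filter.mem_iInf_of_mem I (Filter.mem_principal_self _))
    have hDU : D ∈ 𝒰 := Filter.mem_of_superset (hmemF ∅) diff_subset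
    have hAU : A ∈ 𝒰 := Filter.mem_of_superset hDU hDA
    -- build a type from the ultrafilter
    set x₀ : OType L M A :=
      { sets := {s | Defin L M s ∧ s ⊆ A ∧ s ∈ 𝒰}
        definable_mem := fun s hs => hs.1
        subset_mem := fun s hs => hs.2.1
        top_mem := ⟨hA, subset_rfl, hAU⟩
        nonempty_mem := fun s hs => Ultrafilter.nonempty_of_mem hs.2.2
        inter_mem := fun s hs t ht =>
          ⟨Set.Definable.inter hs.1 ht.1, fun a ha => hs.2.1 ha.1,
            Filter.inter_mem hs.2.2 ht.2.2⟩
        complete := by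
          intro s hsd hsA
          by_cases hs : s ∈ 𝒰
          · exact Or.inl ⟨hsd, hsA, hs⟩
          · refine Or.inr ⟨Set.Definable.sdiff hA hsd, diff_subset, ?_⟩
            have : sᶜ ∈ 𝒰 := Ultrafilter.compl_mem_iff_notMem.2 hs
            have := Filter.inter_mem hAU this
            rwa [← diff_eq] at this } with hx₀
    have hx₀D : D ∈ x₀.sets := ⟨hD, hDA, hDU⟩
    -- but x₀ escapes the cover: contradiction
    have hWmem : W x₀ hx₀D ∩ A ∈ x₀.sets := hWx x₀ hx₀D
    have h1 : W x₀ hx₀D ∩ A ∈ 𝒰 := hWmem.2.2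
    have h2 : D \ ⋃ p ∈ ({⟨x₀, hx₀D⟩} : Finset σ), W' p ∈ 𝒰 := hmemF _
    obtain ⟨a, ha1, ha2⟩ := Ultrafilter.nonempty_of_mem (Filter.inter_mem h1 h2)
    refine ha2.2 ?_
    simp only [Finset.mem_singleton, iUnion_iUnion_eq_left]
    exact ha1.1
  obtain ⟨t, ht⟩ := claim
  refine ⟨t.image (fun p : σ => ind p.1 p.2), ?_⟩
  intro x hx
  have hDx : D ∈ x.sets := hx
  have hsub : D ⊆ ⋃ p ∈ t, (W' p ∩ A) := by
    intro a ha
    obtain ⟨_, ⟨p, rfl⟩, _, ⟨hp, rfl⟩, hap⟩ := ht ha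
    exact mem_iUnion₂.2 ⟨p, hp, hap, hDA ha⟩
  have hmem : (⋃ p ∈ t, (W' p ∩ A)) ∈ x.sets :=
    x.mem_of_superset hDx
      (Set.definable_biUnion_finset (fun p : σ => Set.Definable.inter (hWd p.1 p.2) hA) t)
      (iUnion₂_subset fun p _ => inter_subset_right) hsub
  obtain ⟨p, hpt, hpx⟩ := (x.biUnion_mem_iff t
    (fun p : σ => Set.Definable.inter (hWd p.1 p.2) hA)
    (fun p => inter_subset_right)).1 hmem
  have : x ∈ V (ind p.1 p.2) := hWV p.1 p.2 hpx
  exact mem_iUnion₂.2 ⟨ind p.1 p.2, Finset.mem_image_of_mem _ hpt, this⟩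

end Aux

/-- For `A ⊆ Mᵏ` definable in an o-minimal structure `M` expanding an ordered group, an open
subset `C` of `Sp A` is quasi-compact iff `C = Sp D` for some definable `D ⊆ A`. -/
theorem stmt13 {L : FirstOrder.Language} {M : Type} [L.Structure M]
    [AddCommGroup M] [LinearOrder M] [IsOrderedAddMonoid M] [TopologicalSpace M] [OrderTopology M]
    (hmin : IsOMin L M) (hgrp : ExpandsGroup L M)
    {k : ℕ} (A : Set (Fin k → M)) (hA : Defin L M A)
    (C : Set (OType L M A)) (hC : IsOpen C) :
    IsCompact C ↔
      ∃ D : Set (Fin k → M), Defin L M D ∧ D ⊆ A ∧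
        C = {x : OType L M A | D ∈ x.sets} := by
  classical
  constructor
  · intro hcomp
    obtain ⟨S, hSsub, hSeq⟩ := (OType.isBasis hA).open_eq_sUnion hC
    -- extract a finite subcover from compactness
    have hcover : C ⊆ ⋃ B : S, (B : Set (OType L M A)) := by
      rw [← sUnion_eq_iUnion]; exact hSeq.le
    obtain ⟨t, ht⟩ := hcomp.elim_finite_subcover (fun B : S => (B : Set (OType L M A)))
      (fun B => (OType.isBasis hA).isOpen (hSsub B.2)) hcover
    have hsel : ∀ B : S, ∃ U : Set (Fin k → M), IsOpen U ∧ Defin L M U ∧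
        (B : Set (OType L M A)) = {x : OType L M A | U ∩ A ∈ x.sets} := fun B => hSsub B.2
    choose U hUo hUd hUe using hsel
    refine ⟨⋃ B ∈ t, (U B ∩ A), Set.definable_biUnion_finset
      (fun B => Set.Definable.inter (hUd B) hA) t, iUnion₂_subset fun B _ => inter_subset_right,
      ?_⟩
    ext x
    rw [mem_setOf_eq, x.biUnion_mem_iff t (fun B => Set.Definable.inter (hUd B) hA)
      (fun B => inter_subset_right)]
    constructor
    · intro hx
      have hx' : x ∈ ⋃ B ∈ t, (B : Set (OType L M A)) := ht hx
      obtain ⟨B, hBt, hxB⟩ := mem_iUnion₂.1 hx'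
      refine ⟨B, hBt, ?_⟩
      rw [hUe B] at hxB
      exact hxB
    · rintro ⟨B, hBt, hxB⟩
      have hxB' : x ∈ (B : Set (OType L M A)) := by rw [hUe B]; exact hxB
      have : x ∈ ⋃₀ S := ⟨B, B.2, hxB'⟩
      rwa [← hSeq] at this
  · rintro ⟨D, hD, hDA, rfl⟩
    exact OType.isCompact_sp hA hD hDA
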